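/- arXiv:2208.09067 — 3 statements merged into one kernel-verified Lean document; each statement's English description precedes it below -/
import Mathlib

section
/- For every binary vector y : M → ℝ, one has 𝕃(y) ≥ RHS(𝕃(yη), L, y). In other words, the slim integer L-shaped cut θ ≥ RHS(𝕃(yη), L, y) generated at yη is valid: for every binary y (in particular for the optimal first-stage decision y*), the point (y, 𝕃(y)) satisfies the cut, so the cut never excludes the optimal solution (y*, 𝕃(y*)). -/
open Finset

/-- A vector `y : M → ℝ` is binary if every entry is 0 or 1. -/
def IsBinary {M : Type*} (y : M → ℝ) : Prop := ∀ m, y m = 0 ∨ y m = 1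

/-- The right-hand side of the slim integer L-shaped cut generated at `yη`,
with recourse estimate `ℓ` and lower bound `L`, evaluated at `y`. -/
noncomputable def cutRHS {M : Type*} [Fintype M] (yη : M → ℝ) (ℓ L : ℝ) (y : M → ℝ) : ℝ :=
  (ℓ - L) * ((∑ m ∈ Finset.univ.filter (fun m => yη m = 1), y m) -
      ∑ m ∈ Finset.univ.filter (fun m => ¬ yη m = 1), y m)
    - (ℓ - L) * (((Finset.univ.filter (fun m => yη m = 1)).card : ℝ) - 1) + L

/-- Validity of the slim integer L-shaped cut: for every binary `y`,
`𝕃 y ≥ RHS(𝕃 yη, L, y)`, so in particular the cut generated at `yη` never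
excludes the optimal solution `(y*, 𝕃 y*)`. -/
theorem slim_cut_valid {M : Type*} [Fintype M]
    (yη : M → ℝ) (hyη : IsBinary yη)
    (𝕃 : (M → ℝ) → ℝ) (L : ℝ)
    (hL : ∀ y : M → ℝ, IsBinary y → L ≤ 𝕃 y)
    (y : M → ℝ) (hy : IsBinary y) :
    𝕃 y ≥ cutRHS yη (𝕃 yη) L y := by
  classical
  set S := Finset.univ.filter (fun m => yη m = 1) with hS
  set Sc := Finset.univ.filter (fun m => ¬ yη m = 1) with hSc
  have hℓL : L ≤ 𝕃 yη := hL yη hyη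
  have hy01 : ∀ m, (0:ℝ) ≤ y m ∧ y m ≤ 1 := by
    intro m; rcases hy m with h | h <;> simp [h]
  by_cases heq : y = yη
  · subst heq
    have ha : ∑ m ∈ S, y m = (S.card : ℝ) := by
      rw [show ∑ m ∈ S, y m = ∑ _m ∈ S, (1:ℝ) from
        Finset.sum_congr rfl fun m hm => (Finset.mem_filter.mp hm).2]
      simp
    have hb : ∑ m ∈ Sc, y m = 0 := by
      apply Finset.sum_eq_zero
      intro m hm
      rcases hyη m with h | h
      · exact h
      · exact absurd h (Finset.mem_filter.mp hm).2
    unfold cutRHS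
    rw [← hS, ← hSc, ha, hb]
    ring_nf
    linarith
  · -- there is a coordinate where y differs from yη
    have hdiff : ∃ m, y m ≠ yη m := by
      by_contra h
      push_neg at h
      exact heq (funext h)
    obtain ⟨m₀, hm₀⟩ := hdiff
    have key : (∑ m ∈ S, y m) - (∑ m ∈ Sc, y m) ≤ (S.card : ℝ) - 1 := by
      have hb0 : (0:ℝ) ≤ ∑ m ∈ Sc, y m :=
        Finset.sum_nonneg fun m _ => (hy01 m).1
      have ha1 : ∑ m ∈ S, y m ≤ (S.card : ℝ) := by
        calc ∑ m ∈ S, y m ≤ ∑ _m ∈ S, (1:ℝ) :=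
              Finset.sum_le_sum fun m _ => (hy01 m).2
          _ = (S.card : ℝ) := by simp
      by_cases hmem : m₀ ∈ S
      · -- y m₀ = 0 since yη m₀ = 1 and they differ
        have hyη1 : yη m₀ = 1 := (Finset.mem_filter.mp hmem).2
        have hy0 : y m₀ = 0 := by
          rcases hy m₀ with h | h
          · exact h
          · exact absurd (h.trans hyη1.symm) hm₀
        have : ∑ m ∈ S, y m ≤ (S.card : ℝ) - 1 := by
          rw [← Finset.sum_erase_add S y hmem, hy0, add_zero]
          calc ∑ m ∈ S.erase m₀, y m ≤ ∑ _m ∈ S.erase m₀, (1:ℝ) :=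
                Finset.sum_le_sum fun m _ => (hy01 m).2
            _ = ((S.erase m₀).card : ℝ) := by simp
            _ = (S.card : ℝ) - 1 := by
                rw [Finset.card_erase_of_mem hmem]
                have : 1 ≤ S.card := Finset.card_pos.mpr ⟨m₀, hmem⟩
                push_cast [Nat.cast_sub this]
                ring
        linarith
      · -- m₀ ∈ Sc, yη m₀ = 0, y m₀ = 1
        have hmem' : m₀ ∈ Sc := by
          simp only [hSc, Finset.mem_filter, Finset.mem_univ, true_and]
          intro h
          exact hmem (by simp [hS, h])
        have hyη0 : yη m₀ = 0 := by
          rcases hyη m₀ with h | h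
          · exact h
          · exact absurd (by simp [hS, h]) hmem
        have hy1 : y m₀ = 1 := by
          rcases hy m₀ with h | h
          · exact absurd (h.trans hyη0.symm) hm₀
          · exact h
        have : (1:ℝ) ≤ ∑ m ∈ Sc, y m := by
          rw [← Finset.sum_erase_add Sc y hmem', hy1]
          have : (0:ℝ) ≤ ∑ m ∈ Sc.erase m₀, y m :=
            Finset.sum_nonneg fun m _ => (hy01 m).1
          linarith
        linarith
    unfold cutRHS
    rw [← hS, ← hSc]
    have hnn : (0:ℝ) ≤ 𝕃 yη - L := by linarith
    nlinarith [hL y hy]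
end

section
/- Let ℓ and L be real numbers with ℓ ≥ L. Then for every binary vector y : M → ℝ with y ≠ yη, the cut right-hand side satisfies RHS(ℓ, L, y) ≤ L; that is, away from the generating point the integer L-shaped cut imposes no restriction beyond the lower bound θ ≥ L. -/
open Finset

/-- For `ℓ ≥ L`, at every binary `y ≠ yη` the cut right-hand side is at most `L`:
away from the generating point the cut imposes no restriction beyond `θ ≥ L`. -/
theorem cutRHS_le_lowerBound {M : Type*} [Fintype M]
    (yη : M → ℝ) (hyη : IsBinary yη) (ℓ L : ℝ) (hℓL : ℓ ≥ L)
    (y : M → ℝ) (hy : IsBinary y) (hne : y ≠ yη) :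
    cutRHS yη ℓ L y ≤ L := by
  classical
  set S := Finset.univ.filter (fun m => yη m = 1) with hSdef
  set T := Finset.univ.filter (fun m => ¬ yη m = 1) with hTdef
  obtain ⟨m, hm⟩ : ∃ m, y m ≠ yη m := by
    by_contra h
    push_neg at h
    exact hne (funext h)
  have hsum : (∑ m ∈ S, y m) - ∑ m ∈ T, y m ≤ (S.card : ℝ) - 1 := by
    have hSbound : ∀ s : Finset M, ∑ m ∈ s, y m ≤ (s.card : ℝ) := by
      intro s
      calc ∑ m ∈ s, y m ≤ ∑ m ∈ s, (1 : ℝ) := by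
            refine Finset.sum_le_sum fun i _ => ?_
            rcases hy i with h | h <;> simp [h]
        _ = (s.card : ℝ) := by simp
    have hTnonneg : (0 : ℝ) ≤ ∑ m ∈ T, y m :=
      Finset.sum_nonneg fun i _ => by rcases hy i with h | h <;> simp [h]
    by_cases hmem : yη m = 1
    · -- m ∈ S, y m = 0
      have hmS : m ∈ S := by simp [hSdef, hmem]
      have hym : y m = 0 := by
        rcases hy m with h | h
        · exact h
        · exact absurd (h.trans hmem.symm) hm
      have : ∑ x ∈ S, y x = y m + ∑ x ∈ S.erase m, y x :=
        (Finset.add_sum_erase S y hmS).symm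
      have herase := hSbound (S.erase m)
      have hcard : (S.erase m).card = S.card - 1 := Finset.card_erase_of_mem hmS
      have hSpos : 1 ≤ S.card := Finset.card_pos.mpr ⟨m, hmS⟩
      have hcard' : ((S.erase m).card : ℝ) = (S.card : ℝ) - 1 := by
        rw [hcard]
        push_cast [hSpos]
        ring
      rw [hcard'] at herase
      rw [this, hym]
      linarith
    · -- m ∈ T, y m = 1
      have hmT : m ∈ T := by simp [hTdef, hmem]
      have hym : y m = 1 := by
        rcases hy m with h | h
        · rcases hyη m with h' | h'
          · exact absurd (h.trans h'.symm) hm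
          · exact absurd h' hmem
        · exact h
      have hone : (1 : ℝ) ≤ ∑ x ∈ T, y x := by
        have := Finset.single_le_sum
          (f := y) (fun i _ => by rcases hy i with h | h <;> simp [h]) hmT
        linarith [hym ▸ this]
      have := hSbound S
      linarith
  have hnn : (0 : ℝ) ≤ ℓ - L := by linarith
  have := mul_le_mul_of_nonneg_left hsum hnn
  unfold cutRHS
  rw [← hSdef, ← hTdef]
  linarith
end

section
/- Let a and b be real numbers with b ≤ a (the greedy-heuristic and augmented-heuristic recourse estimates at yη, satisfying 𝕃aug(yη) = b ≤ a = 𝕃gred(yη)). Then for every binary vector y : M → ℝ with y ≠ yη, the greedy cut right-hand side is dominated by the augmented cut right-hand side: RHS(a, L, y) ≤ RHS(b, L, y). Consequently, every pair (y, θ) with y binary, y ≠ yη, satisfying the augmented cut θ ≥ RHS(b, L, y) also satisfies the greedy cut θ ≥ RHS(a, L, y); adding the greedy cut first cannot exclude any such solution that the augmented cut would retain. -/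
open Finset

/-- With `b ≤ a` (augmented vs greedy recourse estimates at `yη`), at every
binary `y ≠ yη` the greedy cut right-hand side is dominated by the augmented
one; hence any pair `(y, θ)` satisfying the augmented cut also satisfies the
greedy cut, so adding the greedy cut first cannot exclude such solutions. -/
theorem greedy_cut_dominated_by_augmented {M : Type*} [Fintype M]
    (yη : M → ℝ) (hyη : IsBinary yη) (a b L : ℝ) (hba : b ≤ a)
    (y : M → ℝ) (hy : IsBinary y) (hne : y ≠ yη) :
    cutRHS yη a L y ≤ cutRHS yη b L y ∧
      ∀ θ : ℝ, θ ≥ cutRHS yη b L y → θ ≥ cutRHS yη a L y := by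
  classical
  set S := Finset.univ.filter (fun m => yη m = 1) with hS
  set T := Finset.univ.filter (fun m => ¬ yη m = 1) with hT
  set c : ℝ := (∑ m ∈ S, y m) - (∑ m ∈ T, y m) - ((S.card : ℝ) - 1) with hc
  have hy0 : ∀ m, 0 ≤ y m := fun m => by rcases hy m with h | h <;> simp [h]
  have hy1 : ∀ m, y m ≤ 1 := fun m => by rcases hy m with h | h <;> simp [h]
  -- there is some m where y and yη differ
  obtain ⟨m, hm⟩ : ∃ m, y m ≠ yη m := by
    by_contra h
    push_neg at h
    exact hne (funext h)
  have hcle : c ≤ 0 := by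
    rcases hyη m with hη0 | hη1
    · -- m ∈ T and y m = 1
      have hmT : m ∈ T := by simp [hT, hη0]
      have hym : y m = 1 := by
        rcases hy m with h | h
        · exact absurd (h.trans hη0.symm) hm
        · exact h
      have h1 : (1 : ℝ) ≤ ∑ x ∈ T, y x := by
        calc (1 : ℝ) = y m := hym.symm
        _ ≤ ∑ x ∈ T, y x := Finset.single_le_sum (fun i _ => hy0 i) hmT
      have h2 : (∑ x ∈ S, y x) ≤ (S.card : ℝ) := by
        calc (∑ x ∈ S, y x) ≤ ∑ _x ∈ S, (1 : ℝ) :=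
          Finset.sum_le_sum (fun i _ => hy1 i)
        _ = (S.card : ℝ) := by simp
      simp only [hc]; linarith
    · -- m ∈ S and y m = 0
      have hmS : m ∈ S := by simp [hS, hη1]
      have hym : y m = 0 := by
        rcases hy m with h | h
        · exact h
        · exact absurd (h.trans hη1.symm) hm
      have h2 : (∑ x ∈ S, y x) ≤ (S.card : ℝ) - 1 := by
        have herase : (∑ x ∈ S, y x) = y m + ∑ x ∈ S.erase m, y x :=
          (Finset.add_sum_erase S y hmS).symm
        have h3 : (∑ x ∈ S.erase m, y x) ≤ ((S.erase m).card : ℝ) := by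
          calc (∑ x ∈ S.erase m, y x) ≤ ∑ _x ∈ S.erase m, (1 : ℝ) :=
            Finset.sum_le_sum (fun i _ => hy1 i)
          _ = ((S.erase m).card : ℝ) := by simp
        have hcard : ((S.erase m).card : ℝ) = (S.card : ℝ) - 1 := by
          rw [Finset.card_erase_of_mem hmS]
          have : 1 ≤ S.card := Finset.card_pos.mpr ⟨m, hmS⟩
          push_cast [Nat.cast_sub this]
          ring
        rw [herase, hym]
        linarith
      have h1 : 0 ≤ ∑ x ∈ T, y x := Finset.sum_nonneg (fun i _ => hy0 i)
      simp only [hc]; linarith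
  have key : cutRHS yη a L y ≤ cutRHS yη b L y := by
    have hmul : (a - L) * c ≤ (b - L) * c :=
      mul_le_mul_of_nonpos_right (by linarith) hcle
    have ha : cutRHS yη a L y = (a - L) * c + L := by
      simp only [cutRHS, hc, ← hS, ← hT]; ring
    have hb : cutRHS yη b L y = (b - L) * c + L := by
      simp only [cutRHS, hc, ← hS, ← hT]; ring
    rw [ha, hb]; linarith
  exact ⟨key, fun θ hθ => le_trans key hθ⟩
end
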